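/- Construction of pseudoconvex weights: assume g satisfies uniform ellipticity (constant λ) and Lipschitz continuity (constant Λ). Let m₀, M₀ > 0 and ψ ∈ C²(Ω̄) satisfy min_{Ω̄}|∇_g ψ| ≥ m₀ and ‖ψ‖_{C²(Ω̄)} ≤ M₀. Then there exists C > 0, depending only on λ, Λ, M₀, such that for every μ ≥ C/m₀ the function φ = e^{μψ} satisfies the strong pseudoconvexity assumption: there exists c₀ > 0 (one may take c₀ = (1/2)m₀²μ²e^{μ min ψ}) such that P(x,ζ)=0 and ζ = ξ + iτ∇φ(x) ≠ 0 imply Q(x,ξ,τ) ≥ c₀|ζ|². -/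

import Mathlib

open MeasureTheory Metric Finset Real Bornology

noncomputable section

/-- Partial derivative `∂_i f (x)`. -/
def pd {n : ℕ} (i : Fin n) (f : (Fin n → ℝ) → ℝ) (x : Fin n → ℝ) : ℝ :=
  fderiv ℝ f x (Pi.single i 1)

/-- Second partial derivative `∂²_{ij} f (x)`. -/
def pd2 {n : ℕ} (i j : Fin n) (f : (Fin n → ℝ) → ℝ) (x : Fin n → ℝ) : ℝ :=
  pd i (fun y => pd j f y) x

/-- `ξ^{(g)} = g(x)⁻¹ ξ`. -/
def raise {n : ℕ} (g : (Fin n → ℝ) → Matrix (Fin n) (Fin n) ℝ)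
    (x : Fin n → ℝ) (ξ : Fin n → ℝ) : Fin n → ℝ :=
  fun i => ∑ j, (g x)⁻¹ i j * ξ j

/-- `∇_g f = g⁻¹ ∇f`. -/
def gradg {n : ℕ} (g : (Fin n → ℝ) → Matrix (Fin n) (Fin n) ℝ)
    (f : (Fin n → ℝ) → ℝ) (x : Fin n → ℝ) : Fin n → ℝ :=
  fun i => ∑ j, (g x)⁻¹ i j * pd j f x

/-- `⟨ξ, η⟩ = g_{ij} ξ_i η_j`. -/
def innerg {n : ℕ} (g : (Fin n → ℝ) → Matrix (Fin n) (Fin n) ℝ)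
    (x : Fin n → ℝ) (ξ η : Fin n → ℝ) : ℝ :=
  ∑ i, ∑ j, g x i j * ξ i * η j

/-- `Δ_g f = ∂_i (g^{ij} ∂_j f)`. -/
def lapg {n : ℕ} (g : (Fin n → ℝ) → Matrix (Fin n) (Fin n) ℝ)
    (f : (Fin n → ℝ) → ℝ) (x : Fin n → ℝ) : ℝ :=
  ∑ i, pd i (fun y => ∑ j, (g y)⁻¹ i j * pd j f y) x

/-- The quadratic form `q(x,ϑ)` of \eqref{Q1}. -/
def qform {n : ℕ} (g : (Fin n → ℝ) → Matrix (Fin n) (Fin n) ℝ)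
    (φ : (Fin n → ℝ) → ℝ) (x : Fin n → ℝ) (ϑ : Fin n → ℝ) : ℝ :=
  4 * ∑ j, ∑ k, pd2 j k φ x * ϑ j * ϑ k
  - 4 * ∑ s, ∑ k, ∑ h, pd s (fun y => g y k h) x * gradg g φ x k * ϑ h * ϑ s
  + 2 * ∑ s, ∑ t, ∑ w, pd s (fun y => g y t w) x * gradg g φ x s * ϑ t * ϑ w

/-- The form `Q(x,ξ,τ)` of \eqref{nuovadefQ}. -/
def Qform {n : ℕ} (g : (Fin n → ℝ) → Matrix (Fin n) (Fin n) ℝ)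
    (φ : (Fin n → ℝ) → ℝ) (x : Fin n → ℝ) (ξ : Fin n → ℝ) (τ : ℝ) : ℝ :=
  4 * ((∑ j, ∑ k, pd2 j k φ x * raise g x ξ j * raise g x ξ k)
      + τ^2 * ∑ j, ∑ k, pd2 j k φ x * gradg g φ x j * gradg g φ x k)
  - 4 * ∑ s, ∑ k, ∑ h, pd s (fun y => g y k h) x * gradg g φ x k * raise g x ξ h * raise g x ξ s
  + 2 * ∑ s, ∑ t, ∑ w, pd s (fun y => g y t w) x * raise g x ξ t * raise g x ξ w * gradg g φ x s
  - 2 * τ^2 * ∑ s, ∑ k, ∑ h, pd s (fun y => g y k h) x * gradg g φ x k * gradg g φ x h * gradg g φ x s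

/-- `P(x,ζ) = g^{ij}(x) ζ_i ζ_j` for complex `ζ`. -/
def Pc {n : ℕ} (g : (Fin n → ℝ) → Matrix (Fin n) (Fin n) ℝ)
    (x : Fin n → ℝ) (ζ : Fin n → ℂ) : ℂ :=
  ∑ i, ∑ j, ((g x)⁻¹ i j : ℂ) * ζ i * ζ j

section auxlemmas

variable {n : ℕ}

lemma abs_sum_le' {f : Fin n → ℝ} {B : ℝ} (h : ∀ i, |f i| ≤ B) :
    |∑ i, f i| ≤ n * B := by
  calc |∑ i, f i| ≤ ∑ i, |f i| := Finset.abs_sum_le_sum_abs _ _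
    _ ≤ ∑ _i : Fin n, B := Finset.sum_le_sum (fun i _ => h i)
    _ = n * B := by simp [Finset.sum_const, Finset.card_univ, nsmul_eq_mul]

lemma abs_mul_le' {a b A B : ℝ} (ha : |a| ≤ A) (hb : |b| ≤ B) : |a * b| ≤ A * B := by
  rw [abs_mul]
  exact mul_le_mul ha hb (abs_nonneg b) ((abs_nonneg a).trans ha)

lemma pd_exp (ψ : (Fin n → ℝ) → ℝ) (hψ : ContDiff ℝ 2 ψ) (μ : ℝ) (i : Fin n)
    (y : Fin n → ℝ) :
    pd i (fun z => Real.exp (μ * ψ z)) y = Real.exp (μ * ψ y) * (μ * pd i ψ y) := by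
  have hd : HasFDerivAt ψ (fderiv ℝ ψ y) y :=
    ((hψ.differentiable (by norm_num)) y).hasFDerivAt
  have h1 : HasFDerivAt (fun z => μ * ψ z) (μ • fderiv ℝ ψ y) y := hd.const_mul μ
  have h2 := h1.exp
  rw [pd, h2.fderiv]
  simp [pd]

lemma hasFDerivAt_pd (ψ : (Fin n → ℝ) → ℝ) (hψ : ContDiff ℝ 2 ψ) (k : Fin n)
    (x : Fin n → ℝ) :
    HasFDerivAt (fun y => pd k ψ y)
      ((ContinuousLinearMap.apply ℝ ℝ (Pi.single k 1)).comp
        (fderiv ℝ (fderiv ℝ ψ) x)) x := by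
  have h1 : ContDiff ℝ 1 (fderiv ℝ ψ) := hψ.fderiv_right (by norm_num)
  have h2 : HasFDerivAt (fderiv ℝ ψ) (fderiv ℝ (fderiv ℝ ψ) x) x :=
    ((h1.differentiable (by norm_num)) x).hasFDerivAt
  exact ((ContinuousLinearMap.apply ℝ ℝ (Pi.single k 1)).hasFDerivAt).comp x h2

lemma pd2_eq (ψ : (Fin n → ℝ) → ℝ) (hψ : ContDiff ℝ 2 ψ) (j k : Fin n) (x : Fin n → ℝ) :
    pd2 j k ψ x = (fderiv ℝ (fderiv ℝ ψ) x (Pi.single j 1)) (Pi.single k 1) := by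
  rw [pd2, pd, (hasFDerivAt_pd ψ hψ k x).fderiv]
  rfl

lemma pd2_abs_le (ψ : (Fin n → ℝ) → ℝ) (hψ : ContDiff ℝ 2 ψ) (j k : Fin n)
    (x : Fin n → ℝ) {M : ℝ} (hM : ‖fderiv ℝ (fderiv ℝ ψ) x‖ ≤ M) :
    |pd2 j k ψ x| ≤ M := by
  rw [pd2_eq ψ hψ]
  have h1 : ‖(fderiv ℝ (fderiv ℝ ψ) x (Pi.single j 1) : (Fin n → ℝ) →L[ℝ] ℝ)‖
      ≤ M * ‖(Pi.single j 1 : Fin n → ℝ)‖ :=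
    (fderiv ℝ (fderiv ℝ ψ) x).le_of_opNorm_le hM _
  have hn1 : ‖(Pi.single j (1:ℝ) : Fin n → ℝ)‖ = 1 := by rw [Pi.norm_single]; norm_num
  have hn2 : ‖(Pi.single k (1:ℝ) : Fin n → ℝ)‖ = 1 := by rw [Pi.norm_single]; norm_num
  rw [hn1, mul_one] at h1
  have h2 := (fderiv ℝ (fderiv ℝ ψ) x (Pi.single j 1)).le_of_opNorm_le h1 (Pi.single k 1)
  rw [hn2, mul_one] at h2
  simpa [Real.norm_eq_abs] using h2

lemma pd_abs_le (f : (Fin n → ℝ) → ℝ) (x : Fin n → ℝ) {M : ℝ}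
    (hM : ‖fderiv ℝ f x‖ ≤ M) (i : Fin n) : |pd i f x| ≤ M := by
  have h := (fderiv ℝ f x).le_of_opNorm_le hM (Pi.single i 1)
  have hn1 : ‖(Pi.single i (1:ℝ) : Fin n → ℝ)‖ = 1 := by rw [Pi.norm_single]; norm_num
  rw [hn1, mul_one] at h
  simpa [pd, Real.norm_eq_abs] using h

lemma pd2_exp (ψ : (Fin n → ℝ) → ℝ) (hψ : ContDiff ℝ 2 ψ) (μ : ℝ) (j k : Fin n)
    (x : Fin n → ℝ) :
    pd2 j k (fun z => Real.exp (μ * ψ z)) x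
      = Real.exp (μ * ψ x) * (μ * pd2 j k ψ x + μ^2 * pd j ψ x * pd k ψ x) := by
  have hfun : (fun y => pd k (fun z => Real.exp (μ * ψ z)) y)
      = fun y => Real.exp (μ * ψ y) * (μ * pd k ψ y) := by
    funext y; exact pd_exp ψ hψ μ k y
  rw [pd2, pd, hfun]
  have hd : HasFDerivAt ψ (fderiv ℝ ψ x) x :=
    ((hψ.differentiable (by norm_num)) x).hasFDerivAt
  have hde : HasFDerivAt (fun z => Real.exp (μ * ψ z))
      (Real.exp (μ * ψ x) • (μ • fderiv ℝ ψ x)) x := (hd.const_mul μ).exp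
  have hw : HasFDerivAt (fun y => μ * pd k ψ y)
      (μ • ((ContinuousLinearMap.apply ℝ ℝ (Pi.single k 1)).comp
        (fderiv ℝ (fderiv ℝ ψ) x))) x := (hasFDerivAt_pd ψ hψ k x).const_mul μ
  have hprod : HasFDerivAt (fun y => Real.exp (μ * ψ y) * (μ * pd k ψ y)) _ x := hde.mul hw
  rw [hprod.fderiv]
  simp only [ContinuousLinearMap.add_apply, ContinuousLinearMap.smul_apply,
    ContinuousLinearMap.comp_apply, ContinuousLinearMap.apply_apply, smul_eq_mul]
  rw [pd2_eq ψ hψ]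
  simp [pd]
  ring

lemma pd_abs_le_of_lip (f : (Fin n → ℝ) → ℝ) {K : ℝ} (hK : 0 ≤ K)
    (h : ∀ a b : Fin n → ℝ, |f a - f b| ≤ K * dist a b) (s : Fin n) (x : Fin n → ℝ) :
    |pd s f x| ≤ K := by
  by_cases hd : DifferentiableAt ℝ f x
  · have hl : LipschitzWith (Real.toNNReal K) f := by
      apply LipschitzWith.of_dist_le_mul
      intro a b
      rw [Real.coe_toNNReal _ hK, Real.dist_eq]
      exact h a b
    have hb : ‖fderiv ℝ f x‖ ≤ K := by
      have := hd.hasFDerivAt.le_of_lipschitz hl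
      rwa [Real.coe_toNNReal _ hK] at this
    exact pd_abs_le f x hb s
  · simp [pd, fderiv_zero_of_not_differentiableAt hd, hK]

lemma split_quad (c d : ℝ) (H : Fin n → Fin n → ℝ) (a u : Fin n → ℝ) :
    ∑ j, ∑ k, (c * H j k + d * (a j * a k)) * u j * u k
      = c * (∑ j, ∑ k, H j k * u j * u k) + d * (∑ j, a j * u j)^2 := by
  rw [sq, Finset.sum_mul_sum]
  simp only [Finset.mul_sum]
  rw [← Finset.sum_add_distrib]
  refine Finset.sum_congr rfl fun j _ => ?_
  rw [← Finset.sum_add_distrib]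
  refine Finset.sum_congr rfl fun k _ => ?_
  ring

lemma split_cubic (c : ℝ) (D : Fin n → Fin n → Fin n → ℝ) (p q r : Fin n → ℝ) :
    ∑ s, ∑ k, ∑ h, D s k h * (c * p k) * q h * r s
      = c * ∑ s, ∑ k, ∑ h, D s k h * p k * q h * r s := by
  simp only [Finset.mul_sum]
  exact Finset.sum_congr rfl fun s _ => Finset.sum_congr rfl fun k _ =>
    Finset.sum_congr rfl fun h _ => by ring

lemma split_cubic2 (c : ℝ) (D : Fin n → Fin n → Fin n → ℝ) (p q r : Fin n → ℝ) :
    ∑ s, ∑ k, ∑ h, D s k h * p k * q h * (c * r s)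
      = c * ∑ s, ∑ k, ∑ h, D s k h * p k * q h * r s := by
  simp only [Finset.mul_sum]
  exact Finset.sum_congr rfl fun s _ => Finset.sum_congr rfl fun k _ =>
    Finset.sum_congr rfl fun h _ => by ring

lemma split_cubic3 (c : ℝ) (D : Fin n → Fin n → Fin n → ℝ) (p q r : Fin n → ℝ) :
    ∑ s, ∑ k, ∑ h, D s k h * (c * p k) * (c * q h) * (c * r s)
      = c^3 * ∑ s, ∑ k, ∑ h, D s k h * p k * q h * r s := by
  simp only [Finset.mul_sum]
  exact Finset.sum_congr rfl fun s _ => Finset.sum_congr rfl fun k _ =>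
    Finset.sum_congr rfl fun h _ => by ring

lemma expand_bilinear (M : Fin n → Fin n → ℝ) (t : ℝ) (p s : Fin n → ℝ) :
    ∑ i, ∑ j, M i j * (t * p i - s i) * (t * p j - s j)
      = t^2 * (∑ i, ∑ j, M i j * p i * p j) - t * (∑ i, ∑ j, M i j * p i * s j)
        - t * (∑ i, ∑ j, M i j * s i * p j) + ∑ i, ∑ j, M i j * s i * s j := by
  simp only [Finset.mul_sum]
  rw [← Finset.sum_sub_distrib, ← Finset.sum_sub_distrib, ← Finset.sum_add_distrib]
  refine Finset.sum_congr rfl fun i _ => ?_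
  rw [← Finset.sum_sub_distrib, ← Finset.sum_sub_distrib, ← Finset.sum_add_distrib]
  refine Finset.sum_congr rfl fun j _ => ?_
  ring

end auxlemmas

set_option maxHeartbeats 2000000 in
/-- construction of pseudoconvex weights — `φ = e^{μψ}` satisfies the strong
pseudoconvexity assumption for `μ ≥ C/m₀`. -/
theorem stmt_16 {n : ℕ} (hn : 2 ≤ n)
    (Ω : Set (Fin n → ℝ)) (hΩo : IsOpen Ω) (hΩb : IsBounded Ω)
    (g : (Fin n → ℝ) → Matrix (Fin n) (Fin n) ℝ)
    (lam Lam m₀ M₀ : ℝ) (hlam : 1 ≤ lam) (hLam : 0 < Lam)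
    (hsymm : ∀ x, (g x).IsSymm)
    (hell : ∀ (x : Fin n → ℝ) (ξ : Fin n → ℝ),
      lam⁻¹ * (∑ i, (ξ i)^2) ≤ ∑ i, ∑ j, g x i j * ξ i * ξ j
        ∧ (∑ i, ∑ j, g x i j * ξ i * ξ j) ≤ lam * ∑ i, (ξ i)^2)
    (hlip : ∀ x y : Fin n → ℝ,
      (∑ i, ∑ j, |g x i j - g y i j|) ≤ Lam * Real.sqrt (∑ i, (x i - y i)^2))
    (ψ : (Fin n → ℝ) → ℝ) (hψ : ContDiff ℝ 2 ψ)
    (hm₀ : 0 < m₀) (hM₀ : 0 < M₀)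
    (hgradψ : ∀ x ∈ closure Ω,
      m₀ ≤ Real.sqrt (innerg g x (gradg g ψ x) (gradg g ψ x)))
    (hψM : ∀ x ∈ closure Ω, |ψ x| + ‖fderiv ℝ ψ x‖ + ‖fderiv ℝ (fderiv ℝ ψ) x‖ ≤ M₀) :
    ∃ C > 0, ∀ μ : ℝ, C / m₀ ≤ μ →
      ∃ c₀ > 0, ∀ x ∈ closure Ω, ∀ (ξ : Fin n → ℝ) (τ : ℝ),
        Pc g x (fun i =>
            (ξ i : ℂ) + (τ : ℂ) * Complex.I
              * (pd i (fun y => Real.exp (μ * ψ y)) x : ℂ)) = 0 →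
        (fun i => (ξ i : ℂ) + (τ : ℂ) * Complex.I
              * (pd i (fun y => Real.exp (μ * ψ y)) x : ℂ)) ≠ 0 →
        c₀ * ∑ i, Complex.normSq
            ((ξ i : ℂ) + (τ : ℂ) * Complex.I
              * (pd i (fun y => Real.exp (μ * ψ y)) x : ℂ))
          ≤ Qform g (fun y => Real.exp (μ * ψ y)) x ξ τ := by
  classical
  have hlam0 : (0:ℝ) < lam := lt_of_lt_of_le one_pos hlam
  have hn1 : (2:ℝ) ≤ (n:ℝ) := by exact_mod_cast hn
  have hn0 : (0:ℝ) < (n:ℝ) := by linarith only [hn1]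
  set L : ℝ := Lam * Real.sqrt n with hLdef
  have hsqn : (0:ℝ) < Real.sqrt n := Real.sqrt_pos.mpr hn0
  have hL0 : 0 < L := mul_pos hLam hsqn
  set B : ℝ := (8*(n:ℝ)^2*M₀*lam + 8*(n:ℝ)^4*M₀*L*lam^2) * (lam*(n:ℝ)^2*M₀^2) with hBdef
  have hB0 : 0 < B := by
    apply mul_pos
    · apply add_pos
      · exact mul_pos (mul_pos (mul_pos (by norm_num) (pow_pos hn0 2)) hM₀) hlam0
      · exact mul_pos (mul_pos (mul_pos (mul_pos (by norm_num) (pow_pos hn0 4)) hM₀) hL0)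
          (pow_pos hlam0 2)
    · exact mul_pos (mul_pos hlam0 (pow_pos hn0 2)) (pow_pos hM₀ 2)
  set K₂ : ℝ := lam^2*(n:ℝ)^2*M₀^2 + (n:ℝ)*M₀^2 with hK2def
  have hK20 : 0 < K₂ := by
    apply add_pos
    · exact mul_pos (mul_pos (pow_pos hlam0 2) (pow_pos hn0 2)) (pow_pos hM₀ 2)
    · exact mul_pos hn0 (pow_pos hM₀ 2)
  refine ⟨(B + 1) / m₀ ^ 3, div_pos (by linarith) (pow_pos hm₀ 3), ?_⟩
  intro μ hμ
  have hμ0 : 0 < μ :=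
    lt_of_lt_of_le (div_pos (div_pos (by linarith) (pow_pos hm₀ 3)) hm₀) hμ
  have hμB : B ≤ 2 * m₀^4 * μ := by
    rw [div_div, div_le_iff₀ (by positivity)] at hμ
    nlinarith only [hμ, mul_pos (mul_pos (pow_pos hm₀ 3) hm₀) hμ0]
  have hc₀pos : 0 < 2 * m₀^4 * μ^2 * Real.exp (-(μ * M₀)) / K₂ :=
    div_pos (mul_pos (mul_pos (mul_pos two_pos (pow_pos hm₀ 4)) (pow_pos hμ0 2))
      (Real.exp_pos _)) hK20
  refine ⟨2 * m₀^4 * μ^2 * Real.exp (-(μ * M₀)) / K₂, hc₀pos, ?_⟩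
  intro x hx ξ τ hchar _hne
  -- pointwise quantities
  set E : ℝ := Real.exp (μ * ψ x) with hEdef
  have hE0 : 0 < E := Real.exp_pos _
  set a : Fin n → ℝ := fun i => pd i ψ x with hadef
  set u : Fin n → ℝ := fun i => ∑ j, (g x)⁻¹ i j * ξ j with hudef
  set v : Fin n → ℝ := fun i => ∑ j, (g x)⁻¹ i j * a j with hvdef
  set r : ℝ := ∑ i, a i * v i with hrdef
  set Pq : ℝ := ∑ i, ξ i * u i with hPqdef
  have hraise : raise g x ξ = u := rfl
  have hgradψv : gradg g ψ x = v := rfl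
  -- bounds from ψ
  have hψx := hψM x hx
  have hn2 : (0:ℝ) ≤ ‖fderiv ℝ ψ x‖ := norm_nonneg _
  have hn3 : (0:ℝ) ≤ ‖fderiv ℝ (fderiv ℝ ψ) x‖ := ContinuousLinearMap.opNorm_nonneg _
  have hψxb : |ψ x| ≤ M₀ := by linarith only [hψx, hn2, hn3]
  have hfd1 : ‖fderiv ℝ ψ x‖ ≤ M₀ := by linarith only [hψx, hn3, abs_nonneg (ψ x)]
  have hfd2 : ‖fderiv ℝ (fderiv ℝ ψ) x‖ ≤ M₀ := by linarith only [hψx, hn2, abs_nonneg (ψ x)]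
  have ha : ∀ i, |a i| ≤ M₀ := fun i => pd_abs_le ψ x hfd1 i
  have hH : ∀ j k, |pd2 j k ψ x| ≤ M₀ := fun j k => pd2_abs_le ψ hψ j k x hfd2
  have hEl : Real.exp (-(μ * M₀)) ≤ E := by
    apply Real.exp_le_exp.mpr
    have h1 := (abs_le.mp hψxb).1
    nlinarith only [h1, mul_nonneg hμ0.le (show (0:ℝ) ≤ ψ x + M₀ by linarith only [h1])]
  -- Lipschitz bound on derivatives of g
  have hD : ∀ s k h, |pd s (fun y => g y k h) x| ≤ L := by
    intro s k h
    apply pd_abs_le_of_lip _ hL0.le _ s x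
    intro p q'
    have h1 : |g p k h - g q' k h| ≤ ∑ i, ∑ j, |g p i j - g q' i j| := by
      have h2 : ∀ i : Fin n, (0:ℝ) ≤ ∑ j, |g p i j - g q' i j| :=
        fun i => Finset.sum_nonneg (fun j _ => abs_nonneg _)
      calc |g p k h - g q' k h| ≤ ∑ j, |g p k j - g q' k j| :=
            Finset.single_le_sum (f := fun j => |g p k j - g q' k j|)
              (fun j _ => abs_nonneg _) (Finset.mem_univ h)
        _ ≤ ∑ i, ∑ j, |g p i j - g q' i j| :=
            Finset.single_le_sum (f := fun i => ∑ j, |g p i j - g q' i j|)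
              (fun i _ => h2 i) (Finset.mem_univ k)
    have h3 : Real.sqrt (∑ i, (p i - q' i)^2) ≤ Real.sqrt n * dist p q' := by
      have h4 : ∑ i, (p i - q' i)^2 ≤ (n:ℝ) * (dist p q')^2 := by
        calc ∑ i, (p i - q' i)^2 ≤ ∑ _i : Fin n, (dist p q')^2 := by
              apply Finset.sum_le_sum
              intro i _
              have h5 : |p i - q' i| ≤ dist p q' := by
                rw [← Real.dist_eq]; exact dist_le_pi_dist p q' i
              calc (p i - q' i)^2 = |p i - q' i|^2 := (sq_abs _).symm
                _ ≤ (dist p q')^2 := by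
                    exact pow_le_pow_left₀ (abs_nonneg _) h5 2
          _ = (n:ℝ) * (dist p q')^2 := by
              simp [Finset.sum_const, Finset.card_univ, nsmul_eq_mul]
      calc Real.sqrt (∑ i, (p i - q' i)^2) ≤ Real.sqrt ((n:ℝ) * (dist p q')^2) :=
            Real.sqrt_le_sqrt h4
        _ = Real.sqrt n * dist p q' := by
            rw [Real.sqrt_mul (le_of_lt hn0), Real.sqrt_sq dist_nonneg]
    calc |g p k h - g q' k h| ≤ ∑ i, ∑ j, |g p i j - g q' i j| := h1
      _ ≤ Lam * Real.sqrt (∑ i, (p i - q' i)^2) := hlip p q'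
      _ ≤ Lam * (Real.sqrt n * dist p q') := by
          exact mul_le_mul_of_nonneg_left h3 hLam.le
      _ = L * dist p q' := by rw [hLdef]; ring
  -- matrix facts
  have hposdef : (g x).PosDef := by
    refine Matrix.PosDef.of_dotProduct_mulVec_pos ?_ ?_
    · exact hsymm x
    · intro η hη
      have hform0 : dotProduct (star η) ((g x).mulVec η)
          = ∑ i, ∑ j, g x i j * η i * η j := by
        simp only [dotProduct, Matrix.mulVec, star_trivial]
        refine Finset.sum_congr rfl fun i _ => ?_
        rw [Finset.mul_sum]
        refine Finset.sum_congr rfl fun j _ => by ring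
      rw [hform0]
      obtain ⟨i0, hi0⟩ := Function.ne_iff.mp hη
      have hsum : 0 < ∑ i, (η i)^2 := by
        apply Finset.sum_pos' (fun i _ => sq_nonneg _)
        exact ⟨i0, Finset.mem_univ _, by rw [← sq_abs]; exact pow_pos (abs_pos.mpr hi0) 2⟩
      calc (0:ℝ) < lam⁻¹ * ∑ i, (η i)^2 := mul_pos (inv_pos.mpr hlam0) hsum
        _ ≤ _ := (hell x η).1
  have hdet : IsUnit (g x).det := isUnit_iff_ne_zero.mpr hposdef.det_pos.ne'
  have hgG : ∀ i k, ∑ j, g x i j * (g x)⁻¹ j k = if i = k then 1 else 0 := by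
    intro i k
    have h1 := Matrix.mul_nonsing_inv (g x) hdet
    have h2 : (g x * (g x)⁻¹) i k = (1 : Matrix (Fin n) (Fin n) ℝ) i k := by rw [h1]
    rw [Matrix.mul_apply] at h2
    rw [h2, Matrix.one_apply]
  have hgu : ∀ i, ∑ j, g x i j * u j = ξ i := by
    intro i
    calc ∑ j, g x i j * u j = ∑ j, ∑ k, g x i j * ((g x)⁻¹ j k * ξ k) := by
          refine Finset.sum_congr rfl fun j _ => ?_
          rw [hudef]; rw [Finset.mul_sum]
      _ = ∑ k, ∑ j, g x i j * ((g x)⁻¹ j k * ξ k) := Finset.sum_comm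
      _ = ∑ k, (∑ j, g x i j * (g x)⁻¹ j k) * ξ k := by
          refine Finset.sum_congr rfl fun k _ => ?_
          rw [Finset.sum_mul]
          exact Finset.sum_congr rfl fun j _ => by ring
      _ = ∑ k, (if i = k then 1 else 0) * ξ k := by
          refine Finset.sum_congr rfl fun k _ => by rw [hgG]
      _ = ξ i := by simp
  have hgv : ∀ i, ∑ j, g x i j * v j = a i := by
    intro i
    calc ∑ j, g x i j * v j = ∑ j, ∑ k, g x i j * ((g x)⁻¹ j k * a k) := by
          refine Finset.sum_congr rfl fun j _ => ?_
          rw [hvdef]; rw [Finset.mul_sum]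
      _ = ∑ k, ∑ j, g x i j * ((g x)⁻¹ j k * a k) := Finset.sum_comm
      _ = ∑ k, (∑ j, g x i j * (g x)⁻¹ j k) * a k := by
          refine Finset.sum_congr rfl fun k _ => ?_
          rw [Finset.sum_mul]
          exact Finset.sum_congr rfl fun j _ => by ring
      _ = ∑ k, (if i = k then 1 else 0) * a k := by
          refine Finset.sum_congr rfl fun k _ => by rw [hgG]
      _ = a i := by simp
  have hform : ∀ p q : Fin n → ℝ,
      ∑ i, ∑ j, g x i j * p i * q j = ∑ i, p i * ∑ j, g x i j * q j := by
    intro p q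
    refine Finset.sum_congr rfl fun i _ => ?_
    rw [Finset.mul_sum]
    exact Finset.sum_congr rfl fun j _ => by ring
  -- quadratic form identities
  have hguu : ∑ i, ∑ j, g x i j * u i * u j = Pq := by
    rw [hform, hPqdef]
    refine Finset.sum_congr rfl fun i _ => ?_
    rw [hgu i]; ring
  have hgvv : ∑ i, ∑ j, g x i j * v i * v j = r := by
    rw [hform, hrdef]
    refine Finset.sum_congr rfl fun i _ => ?_
    rw [hgv i]; ring
  have hSu : ∑ i, (u i)^2 ≤ lam * Pq := by
    have h1 := (hell x u).1
    rw [hguu] at h1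
    have h2 := mul_le_mul_of_nonneg_left h1 hlam0.le
    rwa [← mul_assoc, mul_inv_cancel₀ hlam0.ne', one_mul] at h2
  have hPq0 : 0 ≤ Pq := by
    have h1 := (hell x u).1
    rw [hguu] at h1
    have h2 : (0:ℝ) ≤ lam⁻¹ * ∑ i, (u i)^2 :=
      mul_nonneg (inv_nonneg.mpr hlam0.le) (Finset.sum_nonneg fun i _ => sq_nonneg _)
    linarith only [h1, h2]
  have hSv : ∑ i, (v i)^2 ≤ lam * r := by
    have h1 := (hell x v).1
    rw [hgvv] at h1
    have h2 := mul_le_mul_of_nonneg_left h1 hlam0.le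
    rwa [← mul_assoc, mul_inv_cancel₀ hlam0.ne', one_mul] at h2
  have hr0 : 0 ≤ r := by
    have h1 := (hell x v).1
    rw [hgvv] at h1
    have h2 : (0:ℝ) ≤ lam⁻¹ * ∑ i, (v i)^2 :=
      mul_nonneg (inv_nonneg.mpr hlam0.le) (Finset.sum_nonneg fun i _ => sq_nonneg _)
    linarith only [h1, h2]
  -- r ≥ m₀²
  have hr_low : m₀^2 ≤ r := by
    have h1 := hgradψ x hx
    have h2 : innerg g x (gradg g ψ x) (gradg g ψ x) = r := by
      rw [hgradψv, innerg, hform, hrdef]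
      refine Finset.sum_congr rfl fun i _ => ?_
      rw [hgv i]; ring
    rw [h2] at h1
    nlinarith only [h1, Real.sq_sqrt hr0, Real.sqrt_nonneg r, hm₀]
  -- Sξ ≤ lam * Pq
  have hSξ : ∑ i, (ξ i)^2 ≤ lam * Pq := by
    have hkey : (0:ℝ) ≤ ∑ i, ∑ j, g x i j * (lam * u i - ξ i) * (lam * u j - ξ j) := by
      have h1 := (hell x (fun i => lam * u i - ξ i)).1
      have h2 : (0:ℝ) ≤ lam⁻¹ * ∑ i, (lam * u i - ξ i)^2 :=
        mul_nonneg (inv_nonneg.mpr hlam0.le) (Finset.sum_nonneg fun i _ => sq_nonneg _)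
      linarith only [h1, h2]
    rw [expand_bilinear (g x) lam u ξ] at hkey
    have hc1 : ∑ i, ∑ j, g x i j * u i * ξ j = ∑ i, (ξ i)^2 := by
      rw [Finset.sum_comm]
      calc ∑ j, ∑ i, g x i j * u i * ξ j
          = ∑ j, (∑ i, g x j i * u i) * ξ j := by
            refine Finset.sum_congr rfl fun j _ => ?_
            rw [Finset.sum_mul]
            refine Finset.sum_congr rfl fun i _ => ?_
            rw [(hsymm x).apply i j]
        _ = ∑ j, (ξ j)^2 := by
            refine Finset.sum_congr rfl fun j _ => ?_
            rw [hgu j]; ring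
    have hc2 : ∑ i, ∑ j, g x i j * ξ i * u j = ∑ i, (ξ i)^2 := by
      rw [hform]
      refine Finset.sum_congr rfl fun i _ => ?_
      rw [hgu i]; ring
    have hc3 := (hell x ξ).2
    rw [hguu, hc1, hc2] at hkey
    nlinarith only [hkey, hc3, hlam0]
  -- derivative structure of φ = exp(μψ)
  have hpdφ : ∀ i, pd i (fun y => Real.exp (μ * ψ y)) x = E * (μ * a i) := by
    intro i
    rw [pd_exp ψ hψ μ i x]
  have hpd2φ : ∀ j k, pd2 j k (fun y => Real.exp (μ * ψ y)) x
      = E * (μ * pd2 j k ψ x + μ^2 * a j * a k) := by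
    intro j k
    rw [pd2_exp ψ hψ μ j k x]
  have hgradφ : gradg g (fun y => Real.exp (μ * ψ y)) x = fun i => μ * E * v i := by
    funext i
    show ∑ j, (g x)⁻¹ i j * pd j (fun y => Real.exp (μ * ψ y)) x = μ * E * v i
    calc ∑ j, (g x)⁻¹ i j * pd j (fun y => Real.exp (μ * ψ y)) x
        = ∑ j, (g x)⁻¹ i j * (E * (μ * a j)) :=
          Finset.sum_congr rfl fun j _ => by rw [hpdφ j]
      _ = μ * E * v i := by
          rw [hvdef, Finset.mul_sum]
          exact Finset.sum_congr rfl fun j _ => by ring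
  -- characteristic condition: real part gives Pq = τ²μ²E²r
  have hPqr : Pq = τ^2 * μ^2 * E^2 * r := by
    have hre := congrArg Complex.re hchar
    unfold Pc at hre
    rw [Complex.re_sum] at hre
    simp only [Complex.zero_re] at hre
    have hre2 : ∀ i : Fin n,
        (∑ j, ((g x)⁻¹ i j : ℂ) * ((ξ i : ℂ) + (τ : ℂ) * Complex.I
            * (pd i (fun y => Real.exp (μ * ψ y)) x : ℂ))
          * ((ξ j : ℂ) + (τ : ℂ) * Complex.I
            * (pd j (fun y => Real.exp (μ * ψ y)) x : ℂ))).re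
          = ∑ j, ((g x)⁻¹ i j * ξ i * ξ j
            - (g x)⁻¹ i j * (τ * (E * (μ * a i))) * (τ * (E * (μ * a j)))) := by
      intro i
      rw [Complex.re_sum]
      refine Finset.sum_congr rfl fun j _ => ?_
      rw [hpdφ i, hpdφ j]
      simp [Complex.mul_re, Complex.mul_im, Complex.add_re, Complex.add_im,
        Complex.ofReal_re, Complex.ofReal_im, Complex.I_re, Complex.I_im]
    rw [Finset.sum_congr rfl (fun i _ => hre2 i)] at hre
    have e1 : ∑ i, ∑ j, (g x)⁻¹ i j * ξ i * ξ j = Pq := by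
      rw [hPqdef]
      refine Finset.sum_congr rfl fun i _ => ?_
      rw [hudef, Finset.mul_sum]
      exact Finset.sum_congr rfl fun j _ => by ring
    have e3 : ∑ i, ∑ j, (g x)⁻¹ i j * a i * a j = r := by
      rw [hrdef]
      refine Finset.sum_congr rfl fun i _ => ?_
      rw [hvdef, Finset.mul_sum]
      exact Finset.sum_congr rfl fun j _ => by ring
    have e2 : ∑ i, ∑ j, (g x)⁻¹ i j * (τ * (E * (μ * a i))) * (τ * (E * (μ * a j)))
        = (τ*E*μ)^2 * r := by
      rw [← e3]
      simp only [Finset.mul_sum]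
      refine Finset.sum_congr rfl fun i _ => Finset.sum_congr rfl fun j _ => by ring
    have hsplit : ∑ i, ∑ j, ((g x)⁻¹ i j * ξ i * ξ j
        - (g x)⁻¹ i j * (τ * (E * (μ * a i))) * (τ * (E * (μ * a j))))
        = Pq - (τ*E*μ)^2 * r := by
      simp only [Finset.sum_sub_distrib]
      rw [e1, e2]
    rw [hsplit] at hre
    linarith only [hre]
  -- norm-squared identity
  have hZeq : ∑ i, Complex.normSq
      ((ξ i : ℂ) + (τ : ℂ) * Complex.I
        * (pd i (fun y => Real.exp (μ * ψ y)) x : ℂ))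
      = (∑ i, (ξ i)^2) + (τ*E*μ)^2 * ∑ i, (a i)^2 := by
    have hterm : ∀ i : Fin n, Complex.normSq
        ((ξ i : ℂ) + (τ : ℂ) * Complex.I
          * (pd i (fun y => Real.exp (μ * ψ y)) x : ℂ))
        = (ξ i)^2 + (τ*E*μ)^2 * (a i)^2 := by
      intro i
      rw [hpdφ i, Complex.normSq_apply]
      simp [Complex.add_re, Complex.add_im, Complex.mul_re, Complex.mul_im]
      ring
    rw [Finset.sum_congr rfl (fun i _ => hterm i), Finset.sum_add_distrib,
      ← Finset.mul_sum]
  -- scalar quantities q and w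
  set q : ℝ := Real.sqrt (lam * Pq) with hqdef
  have hq0 : 0 ≤ q := Real.sqrt_nonneg _
  have hqq : q * q = lam * ((τ^2*μ^2*E^2) * r) := by
    rw [hqdef, Real.mul_self_sqrt (mul_nonneg hlam0.le hPq0), hPqr]
  have hqu : ∀ i, |u i| ≤ q := by
    intro i
    have h1 : (u i)^2 ≤ lam * Pq :=
      le_trans (Finset.single_le_sum (fun j _ => sq_nonneg (u j)) (Finset.mem_univ i)) hSu
    have h2 := Real.sqrt_le_sqrt h1
    rwa [Real.sqrt_sq_eq_abs] at h2
  have hqξ : ∀ i, |ξ i| ≤ q := by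
    intro i
    have h1 : (ξ i)^2 ≤ lam * Pq :=
      le_trans (Finset.single_le_sum (fun j _ => sq_nonneg (ξ j)) (Finset.mem_univ i)) hSξ
    have h2 := Real.sqrt_le_sqrt h1
    rwa [Real.sqrt_sq_eq_abs] at h2
  set w : ℝ := Real.sqrt (lam * r) with hwdef
  have hw0 : 0 ≤ w := Real.sqrt_nonneg _
  have hww : w * w = lam * r := by
    rw [hwdef, Real.mul_self_sqrt (mul_nonneg hlam0.le hr0)]
  have hvw : ∀ i, |v i| ≤ w := by
    intro i
    have h1 : (v i)^2 ≤ lam * r :=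
      le_trans (Finset.single_le_sum (fun j _ => sq_nonneg (v j)) (Finset.mem_univ i)) hSv
    have h2 := Real.sqrt_le_sqrt h1
    rwa [Real.sqrt_sq_eq_abs] at h2
  have hr_up : r ≤ (n:ℝ) * (M₀ * w) := by
    have h1 : |∑ i, a i * v i| ≤ (n:ℝ) * (M₀ * w) :=
      abs_sum_le' (fun i => abs_mul_le' (ha i) (hvw i))
    calc r ≤ |r| := le_abs_self r
      _ = |∑ i, a i * v i| := by rw [hrdef]
      _ ≤ (n:ℝ) * (M₀ * w) := h1
  have hw_up : w ≤ lam * n * M₀ := by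
    nlinarith only [hww, hr_up, hw0, mul_pos (mul_pos hlam0 hn0) hM₀,
      mul_le_mul_of_nonneg_left hr_up hlam0.le]
  have hr_up2 : r ≤ lam * (n:ℝ)^2 * M₀^2 := by
    nlinarith only [mul_self_le_mul_self hw0 hw_up, hww, hlam0]
  -- named sums
  set X₁ : ℝ := ∑ j, ∑ k, pd2 j k ψ x * u j * u k with hX1def
  set X₂ : ℝ := ∑ j, ∑ k, pd2 j k ψ x * v j * v k with hX2def
  set bq : ℝ := ∑ j, a j * u j with hbqdef
  set W₂ : ℝ := ∑ s, ∑ k, ∑ h, pd s (fun y => g y k h) x * v k * u h * u s with hW2def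
  set W₃ : ℝ := ∑ s, ∑ t, ∑ w', pd s (fun y => g y t w') x * u t * u w' * v s with hW3def
  set W₄ : ℝ := ∑ s, ∑ k, ∑ h, pd s (fun y => g y k h) x * v k * v h * v s with hW4def
  -- the Q identity
  have hA1 : ∑ j, ∑ k, pd2 j k (fun y => Real.exp (μ * ψ y)) x
      * raise g x ξ j * raise g x ξ k = (E*μ)*X₁ + (E*μ^2)*bq^2 := by
    calc ∑ j, ∑ k, pd2 j k (fun y => Real.exp (μ * ψ y)) x
        * raise g x ξ j * raise g x ξ k
        = ∑ j, ∑ k, ((E*μ) * pd2 j k ψ x + (E*μ^2) * (a j * a k)) * u j * u k := by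
          refine Finset.sum_congr rfl fun j _ => Finset.sum_congr rfl fun k _ => ?_
          rw [hpd2φ j k, hraise]
          ring
      _ = (E*μ)*X₁ + (E*μ^2)*bq^2 := by
          rw [hX1def, hbqdef]; exact split_quad _ _ _ _ _
  have hA2 : ∑ j, ∑ k, pd2 j k (fun y => Real.exp (μ * ψ y)) x
      * gradg g (fun y => Real.exp (μ * ψ y)) x j
      * gradg g (fun y => Real.exp (μ * ψ y)) x k
      = (E*μ*(μ*E)^2)*X₂ + (E*μ^2*(μ*E)^2)*r^2 := by
    calc ∑ j, ∑ k, pd2 j k (fun y => Real.exp (μ * ψ y)) x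
        * gradg g (fun y => Real.exp (μ * ψ y)) x j
        * gradg g (fun y => Real.exp (μ * ψ y)) x k
        = ∑ j, ∑ k, ((E*μ*(μ*E)^2) * pd2 j k ψ x
            + (E*μ^2*(μ*E)^2) * (a j * a k)) * v j * v k := by
          refine Finset.sum_congr rfl fun j _ => Finset.sum_congr rfl fun k _ => ?_
          rw [hpd2φ j k]
          simp only [hgradφ]
          ring
      _ = (E*μ*(μ*E)^2)*X₂ + (E*μ^2*(μ*E)^2)*r^2 := by
          rw [hX2def, hrdef]; exact split_quad _ _ _ _ _
  have hA3 : ∑ s, ∑ k, ∑ h, pd s (fun y => g y k h) x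
      * gradg g (fun y => Real.exp (μ * ψ y)) x k
      * raise g x ξ h * raise g x ξ s = (μ*E)*W₂ := by
    calc ∑ s, ∑ k, ∑ h, pd s (fun y => g y k h) x
        * gradg g (fun y => Real.exp (μ * ψ y)) x k
        * raise g x ξ h * raise g x ξ s
        = ∑ s, ∑ k, ∑ h, pd s (fun y => g y k h) x * ((μ*E) * v k) * u h * u s := by
          refine Finset.sum_congr rfl fun s _ => Finset.sum_congr rfl fun k _ =>
            Finset.sum_congr rfl fun h _ => ?_
          simp only [hgradφ, hraise]
      _ = (μ*E)*W₂ := by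
          rw [hW2def]
          exact split_cubic (μ*E) (fun s k h => pd s (fun y => g y k h) x) v u u
  have hA4 : ∑ s, ∑ t, ∑ w', pd s (fun y => g y t w') x
      * raise g x ξ t * raise g x ξ w'
      * gradg g (fun y => Real.exp (μ * ψ y)) x s = (μ*E)*W₃ := by
    calc ∑ s, ∑ t, ∑ w', pd s (fun y => g y t w') x
        * raise g x ξ t * raise g x ξ w'
        * gradg g (fun y => Real.exp (μ * ψ y)) x s
        = ∑ s, ∑ t, ∑ w', pd s (fun y => g y t w') x * u t * u w' * ((μ*E) * v s) := by
          refine Finset.sum_congr rfl fun s _ => Finset.sum_congr rfl fun t _ =>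
            Finset.sum_congr rfl fun w' _ => ?_
          simp only [hgradφ, hraise]
      _ = (μ*E)*W₃ := by
          rw [hW3def]
          exact split_cubic2 (μ*E) (fun s t w' => pd s (fun y => g y t w') x) u u v
  have hA5 : ∑ s, ∑ k, ∑ h, pd s (fun y => g y k h) x
      * gradg g (fun y => Real.exp (μ * ψ y)) x k
      * gradg g (fun y => Real.exp (μ * ψ y)) x h
      * gradg g (fun y => Real.exp (μ * ψ y)) x s = (μ*E)^3*W₄ := by
    calc ∑ s, ∑ k, ∑ h, pd s (fun y => g y k h) x
        * gradg g (fun y => Real.exp (μ * ψ y)) x k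
        * gradg g (fun y => Real.exp (μ * ψ y)) x h
        * gradg g (fun y => Real.exp (μ * ψ y)) x s
        = ∑ s, ∑ k, ∑ h, pd s (fun y => g y k h) x
            * ((μ*E) * v k) * ((μ*E) * v h) * ((μ*E) * v s) := by
          refine Finset.sum_congr rfl fun s _ => Finset.sum_congr rfl fun k _ =>
            Finset.sum_congr rfl fun h _ => ?_
          simp only [hgradφ]
      _ = (μ*E)^3*W₄ := by
          rw [hW4def]
          exact split_cubic3 (μ*E) (fun s k h => pd s (fun y => g y k h) x) v v v
  have hQ : Qform g (fun y => Real.exp (μ * ψ y)) x ξ τ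
      = 4*(((E*μ)*X₁ + (E*μ^2)*bq^2)
          + τ^2*((E*μ*(μ*E)^2)*X₂ + (E*μ^2*(μ*E)^2)*r^2))
        - 4*((μ*E)*W₂) + 2*((μ*E)*W₃) - 2*τ^2*((μ*E)^3*W₄) := by
    unfold Qform
    rw [hA1, hA2, hA3, hA4, hA5]
  -- bounds on the named sums
  have hbX₁2 : |X₁| ≤ (n:ℝ)^2*M₀*lam*(τ^2*μ^2*E^2)*r := by
    rw [hX1def]
    calc |∑ j, ∑ k, pd2 j k ψ x * u j * u k| ≤ (n:ℝ)*((n:ℝ)*(M₀*q*q)) :=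
          abs_sum_le' (fun j => abs_sum_le'
            (fun k => abs_mul_le' (abs_mul_le' (hH j k) (hqu j)) (hqu k)))
      _ = ((n:ℝ)*(n:ℝ)*M₀)*(q*q) := by ring
      _ = ((n:ℝ)*(n:ℝ)*M₀)*(lam*((τ^2*μ^2*E^2)*r)) := by rw [hqq]
      _ = (n:ℝ)^2*M₀*lam*(τ^2*μ^2*E^2)*r := by ring
  have hbX₂2 : |X₂| ≤ (n:ℝ)^2*M₀*lam*r := by
    rw [hX2def]
    calc |∑ j, ∑ k, pd2 j k ψ x * v j * v k| ≤ (n:ℝ)*((n:ℝ)*(M₀*w*w)) :=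
          abs_sum_le' (fun j => abs_sum_le'
            (fun k => abs_mul_le' (abs_mul_le' (hH j k) (hvw j)) (hvw k)))
      _ = ((n:ℝ)*(n:ℝ)*M₀)*(w*w) := by ring
      _ = ((n:ℝ)*(n:ℝ)*M₀)*(lam*r) := by rw [hww]
      _ = (n:ℝ)^2*M₀*lam*r := by ring
  have hrT2nn : (0:ℝ) ≤ (n:ℝ)^3*L*lam*(τ^2*μ^2*E^2)*r :=
    mul_nonneg (mul_nonneg (mul_nonneg (mul_nonneg (pow_nonneg hn0.le 3) hL0.le)
      hlam0.le) (by positivity)) hr0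
  have hbW₂2 : |W₂| ≤ ((n:ℝ)^3*L*lam*(τ^2*μ^2*E^2)*r)*(lam*n*M₀) := by
    rw [hW2def]
    calc |∑ s, ∑ k, ∑ h, pd s (fun y => g y k h) x * v k * u h * u s|
        ≤ (n:ℝ)*((n:ℝ)*((n:ℝ)*(L*w*q*q))) :=
          abs_sum_le' (fun s => abs_sum_le' (fun k => abs_sum_le'
            (fun h => abs_mul_le' (abs_mul_le' (abs_mul_le' (hD s k h) (hvw k))
              (hqu h)) (hqu s))))
      _ = ((n:ℝ)*(n:ℝ)*(n:ℝ)*L)*(q*q)*w := by ring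
      _ = ((n:ℝ)*(n:ℝ)*(n:ℝ)*L)*(lam*((τ^2*μ^2*E^2)*r))*w := by rw [hqq]
      _ = ((n:ℝ)^3*L*lam*(τ^2*μ^2*E^2)*r)*w := by ring
      _ ≤ ((n:ℝ)^3*L*lam*(τ^2*μ^2*E^2)*r)*(lam*n*M₀) :=
          mul_le_mul_of_nonneg_left hw_up hrT2nn
  have hbW₃2 : |W₃| ≤ ((n:ℝ)^3*L*lam*(τ^2*μ^2*E^2)*r)*(lam*n*M₀) := by
    rw [hW3def]
    calc |∑ s, ∑ t, ∑ w', pd s (fun y => g y t w') x * u t * u w' * v s|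
        ≤ (n:ℝ)*((n:ℝ)*((n:ℝ)*(L*q*q*w))) :=
          abs_sum_le' (fun s => abs_sum_le' (fun t => abs_sum_le'
            (fun w' => abs_mul_le' (abs_mul_le' (abs_mul_le' (hD s t w') (hqu t))
              (hqu w')) (hvw s))))
      _ = ((n:ℝ)*(n:ℝ)*(n:ℝ)*L)*(q*q)*w := by ring
      _ = ((n:ℝ)*(n:ℝ)*(n:ℝ)*L)*(lam*((τ^2*μ^2*E^2)*r))*w := by rw [hqq]
      _ = ((n:ℝ)^3*L*lam*(τ^2*μ^2*E^2)*r)*w := by ring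
      _ ≤ ((n:ℝ)^3*L*lam*(τ^2*μ^2*E^2)*r)*(lam*n*M₀) :=
          mul_le_mul_of_nonneg_left hw_up hrT2nn
  have hrLnn : (0:ℝ) ≤ (n:ℝ)^3*L*lam*r :=
    mul_nonneg (mul_nonneg (mul_nonneg (pow_nonneg hn0.le 3) hL0.le) hlam0.le) hr0
  have hbW₄2 : |W₄| ≤ ((n:ℝ)^3*L*lam*r)*(lam*n*M₀) := by
    rw [hW4def]
    calc |∑ s, ∑ k, ∑ h, pd s (fun y => g y k h) x * v k * v h * v s|
        ≤ (n:ℝ)*((n:ℝ)*((n:ℝ)*(L*w*w*w))) :=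
          abs_sum_le' (fun s => abs_sum_le' (fun k => abs_sum_le'
            (fun h => abs_mul_le' (abs_mul_le' (abs_mul_le' (hD s k h) (hvw k))
              (hvw h)) (hvw s))))
      _ = ((n:ℝ)*(n:ℝ)*(n:ℝ)*L)*(w*w)*w := by ring
      _ = ((n:ℝ)*(n:ℝ)*(n:ℝ)*L)*(lam*r)*w := by rw [hww]
      _ = ((n:ℝ)^3*L*lam*r)*w := by ring
      _ ≤ ((n:ℝ)^3*L*lam*r)*(lam*n*M₀) := mul_le_mul_of_nonneg_left hw_up hrLnn
  have hbSa : ∑ i, (a i)^2 ≤ (n:ℝ) * M₀^2 := by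
    calc ∑ i, (a i)^2 ≤ ∑ _i : Fin n, M₀^2 := by
          apply Finset.sum_le_sum
          intro i _
          calc (a i)^2 = |a i|^2 := (sq_abs _).symm
            _ ≤ M₀^2 := pow_le_pow_left₀ (abs_nonneg _) (ha i) 2
      _ = (n:ℝ) * M₀^2 := by simp [Finset.sum_const, Finset.card_univ, nsmul_eq_mul]
  -- positivity helpers
  have hP3 : (0:ℝ) ≤ τ^2*μ^3*E^3 :=
    mul_nonneg (mul_nonneg (sq_nonneg τ) (pow_pos hμ0 3).le) (pow_pos hE0 3).le
  have hT2 : (0:ℝ) ≤ τ^2*μ^2*E^2 := by positivity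
  have hEμnn : (0:ℝ) ≤ E*μ := (mul_pos hE0 hμ0).le
  have hμEnn : (0:ℝ) ≤ μ*E := (mul_pos hμ0 hE0).le
  -- error term bounds
  have t1 : |4*((E*μ)*X₁)| ≤ 4*(n:ℝ)^2*M₀*lam*(lam*(n:ℝ)^2*M₀^2)*(τ^2*μ^3*E^3) := by
    rw [abs_mul, abs_of_nonneg (by norm_num : (0:ℝ) ≤ 4), abs_mul,
      abs_of_nonneg hEμnn]
    calc 4*((E*μ)*|X₁|) ≤ 4*((E*μ)*((n:ℝ)^2*M₀*lam*(τ^2*μ^2*E^2)*r)) := by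
          apply mul_le_mul_of_nonneg_left _ (by norm_num : (0:ℝ) ≤ 4)
          exact mul_le_mul_of_nonneg_left hbX₁2 hEμnn
      _ = (4*(n:ℝ)^2*M₀*lam*(τ^2*μ^3*E^3))*r := by ring
      _ ≤ (4*(n:ℝ)^2*M₀*lam*(τ^2*μ^3*E^3))*(lam*(n:ℝ)^2*M₀^2) := by
          apply mul_le_mul_of_nonneg_left hr_up2
          exact mul_nonneg (mul_nonneg (mul_nonneg (mul_nonneg (by norm_num)
            (sq_nonneg (n:ℝ))) hM₀.le) hlam0.le) hP3
      _ = 4*(n:ℝ)^2*M₀*lam*(lam*(n:ℝ)^2*M₀^2)*(τ^2*μ^3*E^3) := by ring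
  have t2 : |4*((τ^2*μ^3*E^3)*X₂)| ≤ 4*(n:ℝ)^2*M₀*lam*(lam*(n:ℝ)^2*M₀^2)*(τ^2*μ^3*E^3) := by
    rw [abs_mul, abs_of_nonneg (by norm_num : (0:ℝ) ≤ 4), abs_mul,
      abs_of_nonneg hP3]
    calc 4*((τ^2*μ^3*E^3)*|X₂|) ≤ 4*((τ^2*μ^3*E^3)*((n:ℝ)^2*M₀*lam*r)) := by
          apply mul_le_mul_of_nonneg_left _ (by norm_num : (0:ℝ) ≤ 4)
          exact mul_le_mul_of_nonneg_left hbX₂2 hP3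
      _ = (4*(n:ℝ)^2*M₀*lam*(τ^2*μ^3*E^3))*r := by ring
      _ ≤ (4*(n:ℝ)^2*M₀*lam*(τ^2*μ^3*E^3))*(lam*(n:ℝ)^2*M₀^2) := by
          apply mul_le_mul_of_nonneg_left hr_up2
          exact mul_nonneg (mul_nonneg (mul_nonneg (mul_nonneg (by norm_num)
            (sq_nonneg (n:ℝ))) hM₀.le) hlam0.le) hP3
      _ = 4*(n:ℝ)^2*M₀*lam*(lam*(n:ℝ)^2*M₀^2)*(τ^2*μ^3*E^3) := by ring
  have hW23nn : (0:ℝ) ≤ 4*(n:ℝ)^4*M₀*L*lam^2*(τ^2*μ^3*E^3) :=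
    mul_nonneg (mul_nonneg (mul_nonneg (mul_nonneg (mul_nonneg (by norm_num)
      (pow_nonneg hn0.le 4)) hM₀.le) hL0.le) (sq_nonneg lam)) hP3
  have t3 : |4*((μ*E)*W₂)| ≤ 4*(n:ℝ)^4*M₀*L*lam^2*(lam*(n:ℝ)^2*M₀^2)*(τ^2*μ^3*E^3) := by
    rw [abs_mul, abs_of_nonneg (by norm_num : (0:ℝ) ≤ 4), abs_mul,
      abs_of_nonneg hμEnn]
    calc 4*((μ*E)*|W₂|)
        ≤ 4*((μ*E)*(((n:ℝ)^3*L*lam*(τ^2*μ^2*E^2)*r)*(lam*n*M₀))) := by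
          apply mul_le_mul_of_nonneg_left _ (by norm_num : (0:ℝ) ≤ 4)
          exact mul_le_mul_of_nonneg_left hbW₂2 hμEnn
      _ = (4*(n:ℝ)^4*M₀*L*lam^2*(τ^2*μ^3*E^3))*r := by ring
      _ ≤ (4*(n:ℝ)^4*M₀*L*lam^2*(τ^2*μ^3*E^3))*(lam*(n:ℝ)^2*M₀^2) :=
          mul_le_mul_of_nonneg_left hr_up2 hW23nn
      _ = 4*(n:ℝ)^4*M₀*L*lam^2*(lam*(n:ℝ)^2*M₀^2)*(τ^2*μ^3*E^3) := by ring
  have hW4nn : (0:ℝ) ≤ 2*(n:ℝ)^4*M₀*L*lam^2*(τ^2*μ^3*E^3) :=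
    mul_nonneg (mul_nonneg (mul_nonneg (mul_nonneg (mul_nonneg (by norm_num)
      (pow_nonneg hn0.le 4)) hM₀.le) hL0.le) (sq_nonneg lam)) hP3
  have t4 : |2*((μ*E)*W₃)| ≤ 2*(n:ℝ)^4*M₀*L*lam^2*(lam*(n:ℝ)^2*M₀^2)*(τ^2*μ^3*E^3) := by
    rw [abs_mul, abs_of_nonneg (by norm_num : (0:ℝ) ≤ 2), abs_mul,
      abs_of_nonneg hμEnn]
    calc 2*((μ*E)*|W₃|)
        ≤ 2*((μ*E)*(((n:ℝ)^3*L*lam*(τ^2*μ^2*E^2)*r)*(lam*n*M₀))) := by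
          apply mul_le_mul_of_nonneg_left _ (by norm_num : (0:ℝ) ≤ 2)
          exact mul_le_mul_of_nonneg_left hbW₃2 hμEnn
      _ = (2*(n:ℝ)^4*M₀*L*lam^2*(τ^2*μ^3*E^3))*r := by ring
      _ ≤ (2*(n:ℝ)^4*M₀*L*lam^2*(τ^2*μ^3*E^3))*(lam*(n:ℝ)^2*M₀^2) :=
          mul_le_mul_of_nonneg_left hr_up2 hW4nn
      _ = 2*(n:ℝ)^4*M₀*L*lam^2*(lam*(n:ℝ)^2*M₀^2)*(τ^2*μ^3*E^3) := by ring
  have t5 : |2*((τ^2*μ^3*E^3)*W₄)| ≤ 2*(n:ℝ)^4*M₀*L*lam^2*(lam*(n:ℝ)^2*M₀^2)*(τ^2*μ^3*E^3) := by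
    rw [abs_mul, abs_of_nonneg (by norm_num : (0:ℝ) ≤ 2), abs_mul,
      abs_of_nonneg hP3]
    calc 2*((τ^2*μ^3*E^3)*|W₄|)
        ≤ 2*((τ^2*μ^3*E^3)*(((n:ℝ)^3*L*lam*r)*(lam*n*M₀))) := by
          apply mul_le_mul_of_nonneg_left _ (by norm_num : (0:ℝ) ≤ 2)
          exact mul_le_mul_of_nonneg_left hbW₄2 hP3
      _ = (2*(n:ℝ)^4*M₀*L*lam^2*(τ^2*μ^3*E^3))*r := by ring
      _ ≤ (2*(n:ℝ)^4*M₀*L*lam^2*(τ^2*μ^3*E^3))*(lam*(n:ℝ)^2*M₀^2) :=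
          mul_le_mul_of_nonneg_left hr_up2 hW4nn
      _ = 2*(n:ℝ)^4*M₀*L*lam^2*(lam*(n:ℝ)^2*M₀^2)*(τ^2*μ^3*E^3) := by ring
  -- main positive term and bq
  have hr2 : m₀^4 ≤ r^2 := by nlinarith only [hr_low, sq_nonneg m₀, hm₀]
  have hmainnn : (0:ℝ) ≤ 4*τ^2*(E*μ^2*(μ*E)^2) :=
    mul_nonneg (mul_nonneg (by norm_num) (sq_nonneg τ))
      (mul_nonneg (mul_nonneg hE0.le (sq_nonneg μ)) (sq_nonneg (μ*E)))
  have hmainlow : 4*m₀^4*μ*(τ^2*μ^3*E^3) ≤ 4*τ^2*((E*μ^2*(μ*E)^2)*r^2) := by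
    linarith only [mul_le_mul_of_nonneg_left hr2 hmainnn]
  have hbqnn : (0:ℝ) ≤ 4*((E*μ^2)*bq^2) :=
    mul_nonneg (by norm_num) (mul_nonneg (mul_nonneg hE0.le (sq_nonneg μ)) (sq_nonneg bq))
  -- the main chain
  have hZb : (∑ i, (ξ i)^2) + (τ*E*μ)^2 * ∑ i, (a i)^2 ≤ (τ^2*μ^2*E^2)*K₂ := by
    have h1 : (∑ i, (ξ i)^2) ≤ lam*(τ^2*μ^2*E^2)*r := by
      calc (∑ i, (ξ i)^2) ≤ lam * Pq := hSξ
        _ = lam*(τ^2*μ^2*E^2)*r := by rw [hPqr]; ring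
    have h2 : lam*(τ^2*μ^2*E^2)*r ≤ lam*(τ^2*μ^2*E^2)*(lam*(n:ℝ)^2*M₀^2) := by
      apply mul_le_mul_of_nonneg_left hr_up2
      exact mul_nonneg hlam0.le hT2
    have h3 : (τ*E*μ)^2 * (∑ i, (a i)^2) ≤ (τ*E*μ)^2 * ((n:ℝ)*M₀^2) :=
      mul_le_mul_of_nonneg_left hbSa (sq_nonneg _)
    rw [hK2def]
    linarith only [h1, h2, h3]
  have hc₀nn : (0:ℝ) ≤ 2 * m₀^4 * μ^2 * Real.exp (-(μ * M₀)) / K₂ := hc₀pos.le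
  rw [hZeq]
  calc (2 * m₀^4 * μ^2 * Real.exp (-(μ * M₀)) / K₂)
      * ((∑ i, (ξ i)^2) + (τ*E*μ)^2 * ∑ i, (a i)^2)
      ≤ (2 * m₀^4 * μ^2 * Real.exp (-(μ * M₀)) / K₂) * ((τ^2*μ^2*E^2)*K₂) :=
        mul_le_mul_of_nonneg_left hZb hc₀nn
    _ = (2 * m₀^4 * μ^2 * Real.exp (-(μ * M₀))) * (τ^2*μ^2*E^2) := by
        field_simp
    _ ≤ (2 * m₀^4 * μ^2 * E) * (τ^2*μ^2*E^2) := by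
        apply mul_le_mul_of_nonneg_right _ hT2
        apply mul_le_mul_of_nonneg_left hEl
        exact mul_nonneg (mul_nonneg two_pos.le (pow_pos hm₀ 4).le) (sq_nonneg μ)
    _ = 4*m₀^4*μ*(τ^2*μ^3*E^3) - B*(τ^2*μ^3*E^3)
        - ((2*m₀^4*μ - B)*(τ^2*μ^3*E^3)) := by ring
    _ ≤ 4*m₀^4*μ*(τ^2*μ^3*E^3) - B*(τ^2*μ^3*E^3) := by
        have h := mul_nonneg (show (0:ℝ) ≤ 2*m₀^4*μ - B by linarith only [hμB]) hP3
        linarith only [h]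
    _ ≤ Qform g (fun y => Real.exp (μ * ψ y)) x ξ τ := by
        rw [hQ, hBdef]
        have n1 := (abs_le.mp t1).1
        have n2 := (abs_le.mp t2).1
        have n3 := (abs_le.mp t3).2
        have n4 := (abs_le.mp t4).1
        have n5 := (abs_le.mp t5).2
        linarith only [n1, n2, n3, n4, n5, hmainlow, hbqnn]
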